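/- For every n \ge 2, the edge-bandwidth of the complete graph K_n equals \lfloor n^2/4 \rfloor + \lceil n/2 \rceil - 2. -/

import Mathlib

open SimpleGraph

/-- The edge-bandwidth of a finite simple graph: the minimum over injective integer
labelings of the edges of the maximum difference of labels on incident edges. -/
noncomputable def edgeBW {V : Type*} [Fintype V] (G : SimpleGraph V) : ℕ :=
  sInf {k : ℕ | ∃ f : G.edgeSet → ℤ, Function.Injective f ∧
    ∀ e e' : G.edgeSet, e ≠ e' → (∃ v, v ∈ (e : Sym2 V) ∧ v ∈ (e' : Sym2 V)) →
      ((f e - f e').natAbs ≤ k)}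

/-- The bandwidth of a finite simple graph: the minimum over injective integer
labelings of the vertices of the maximum difference of labels on adjacent vertices. -/
noncomputable def bw {V : Type*} [Fintype V] (G : SimpleGraph V) : ℕ :=
  sInf {k : ℕ | ∃ g : V → ℤ, Function.Injective g ∧
    ∀ u v, G.Adj u v → (g u - g v).natAbs ≤ k}

private def Tz (a : ℤ) : ℤ := a * (a - 1) / 2

private lemma two_Tz (a : ℤ) : 2 * Tz a = a * (a - 1) := by
  have h : Even (a * (a - 1)) := by
    rcases Int.even_or_odd a with h | h
    · exact h.mul_right _
    · exact (Odd.sub_odd h odd_one).mul_left _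
  obtain ⟨b, hb⟩ := h
  unfold Tz
  omega

private lemma Tz_succ (a : ℤ) : Tz (a + 1) = Tz a + a := by
  have h1 := two_Tz (a + 1); have h2 := two_Tz a; nlinarith [h1, h2]

private lemma Tz_nonneg {a : ℤ} (ha : 0 ≤ a) : 0 ≤ Tz a := by
  have h := two_Tz a
  rcases ha.lt_or_eq with h1 | h1
  · nlinarith [mul_nonneg (by omega : (0:ℤ) ≤ a) (by omega : (0:ℤ) ≤ a - 1)]
  · have : a = 0 := h1.symm
    subst this; simp [Tz]

private lemma Tz_mono {a b : ℤ} (ha : 0 ≤ a) (hab : a ≤ b) : Tz a ≤ Tz b := by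
  have h1 := two_Tz a; have h2 := two_Tz b
  rcases ha.lt_or_eq with h3 | h3
  · nlinarith [mul_nonneg (by omega : (0:ℤ) ≤ b - a) (by omega : (0:ℤ) ≤ a + b - 1)]
  · have : a = 0 := h3.symm
    subst this
    simpa [Tz] using Tz_nonneg hab

private lemma colex_inj {i j i' j' : ℤ} (hi : 0 ≤ i) (hij : i < j)
    (hi' : 0 ≤ i') (hij' : i' < j') (h : Tz j + i = Tz j' + i') :
    i = i' ∧ j = j' := by
  rcases lt_trichotomy j j' with hlt | heq | hgt
  · exfalso
    have h1 : Tz (j + 1) = Tz j + j := Tz_succ j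
    have h2 : Tz (j + 1) ≤ Tz j' := Tz_mono (by omega) (by omega)
    omega
  · subst heq; constructor <;> omega
  · exfalso
    have h1 : Tz (j' + 1) = Tz j' + j' := Tz_succ j'
    have h2 : Tz (j' + 1) ≤ Tz j := Tz_mono (by omega) (by omega)
    omega
private lemma Tz_lb {a : ℤ} (ha : 0 ≤ a) : a ≤ Tz a + 1 := by
  rcases le_or_gt a 1 with h | h
  · interval_cases a <;> norm_num [Tz]
  · nlinarith [two_Tz a, mul_nonneg (by omega : (0:ℤ) ≤ a - 1) (by omega : (0:ℤ) ≤ a - 2)]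

/-- The edge labeling of the complete graph, as a function of `i < j` (in `[0, R+S]`). -/
private def Pf (R S i j : ℤ) : ℤ :=
  if j ≤ R then Tz j + i
  else if i + j ≤ 2*R - 1 then Tz R + Tz (R+1) - Tz (2*R+1-j) + i
  else if i ≤ R - 1 then Tz R + Tz (R+1) + i*(S-R+1) + Tz i + (j - 2*R + i)
  else if i = R then Tz R + (R*S+R) + (j - R - 1)
  else Tz R + (R*S+R+S) + Tz S - 1 - Tz (R+S-i) - (R+S-j)

/-- Left end of the window of vertex `i`. -/
private def Af (R i : ℤ) : ℤ :=
  if i ≤ R then Tz i else Tz R + Tz (R+1) - Tz (2*R+1-i)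

set_option maxHeartbeats 2000000 in
private lemma Pf_win (R S : ℤ) (hR : 0 ≤ R) (hRS : R ≤ S) (hSR : S ≤ R + 1) (hS1 : 1 ≤ S)
    (i j : ℤ) (hi : 0 ≤ i) (hij : i < j) (hj : j ≤ R + S) :
    (Af R i ≤ Pf R S i j ∧ Pf R S i j ≤ Af R i + (R*S + R + S - 1)) ∧
    (Af R j ≤ Pf R S i j ∧ Pf R S i j ≤ Af R j + (R*S + R + S - 1)) := by
  have hRR : R * R ≤ R * S := mul_le_mul_of_nonneg_left hRS hR
  by_cases hb1 : j ≤ R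
  · -- B1
    have hPi : Pf R S i j = Tz j + i := by unfold Pf; rw [if_pos hb1]
    have hAi : Af R i = Tz i := by unfold Af; rw [if_pos (by omega : i ≤ R)]
    have hAj : Af R j = Tz j := by unfold Af; rw [if_pos hb1]
    have m1 : Tz i ≤ Tz j := Tz_mono hi (le_of_lt hij)
    have m2 : Tz j ≤ Tz R := Tz_mono (by omega) hb1
    have m3 : i ≤ Tz i + 1 := Tz_lb hi
    have m4 : 0 ≤ Tz i := Tz_nonneg hi
    have hR1 : 1 ≤ R := by omega
    rw [hPi, hAi, hAj]
    refine ⟨⟨by linarith, ?_⟩, ⟨by linarith, ?_⟩⟩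
    · nlinarith [two_Tz R]
    · nlinarith [two_Tz R]
  · by_cases hb2 : i + j ≤ 2*R - 1
    · -- B2
      have hPi : Pf R S i j = Tz R + Tz (R+1) - Tz (2*R+1-j) + i := by
        unfold Pf; rw [if_neg hb1, if_pos hb2]
      have hAi : Af R i = Tz i := by unfold Af; rw [if_pos (by omega : i ≤ R)]
      have hAj : Af R j = Tz R + Tz (R+1) - Tz (2*R+1-j) := by unfold Af; rw [if_neg hb1]
      have e3 : Tz (i+2) ≤ Tz (2*R+1-j) := Tz_mono (by omega) (by omega)
      have e4 : Tz (i+2) = Tz i + (2*i+1) := by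
        have a1 := Tz_succ (i+1); have a2 := Tz_succ i
        rw [show i+1+1 = i+2 by ring] at a1; omega
      have m1 : Tz i ≤ Tz R := Tz_mono hi (by omega)
      have m2 : Tz (2*R+1-j) ≤ Tz R := Tz_mono (by omega) (by omega)
      have m3 : Tz R ≤ Tz (R+1) := Tz_mono hR (by omega)
      have m4 : 0 ≤ Tz i := Tz_nonneg hi
      have m5 : 0 ≤ Tz (2*R+1-j) := Tz_nonneg (by omega)
      rw [hPi, hAi, hAj]
      refine ⟨⟨by linarith, ?_⟩, ⟨by linarith, ?_⟩⟩
      · nlinarith [two_Tz R, two_Tz (R+1)]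
      · nlinarith [two_Tz R, two_Tz (R+1)]
    · by_cases hb3 : i ≤ R - 1
      · -- B3
        have hPi : Pf R S i j = Tz R + Tz (R+1) + i*(S-R+1) + Tz i + (j - 2*R + i) := by
          unfold Pf; rw [if_neg hb1, if_neg hb2, if_pos hb3]
        have hAi : Af R i = Tz i := by unfold Af; rw [if_pos (by omega : i ≤ R)]
        have hAj : Af R j = Tz R + Tz (R+1) - Tz (2*R+1-j) := by unfold Af; rw [if_neg hb1]
        have he0 : (0:ℤ) ≤ 2*R+1-j := by omega
        have m1 : 0 ≤ Tz i := Tz_nonneg hi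
        have m2 : 0 ≤ Tz R := Tz_nonneg hR
        have m3 : 0 ≤ Tz (R+1) := Tz_nonneg (by omega)
        have m4 : 0 ≤ Tz (2*R+1-j) := Tz_nonneg he0
        have m5 : 0 ≤ i*(S-R+1) := mul_nonneg hi (by omega)
        have m6 : Tz (2*R+1-j) ≤ Tz (i+1) := Tz_mono he0 (by omega)
        have m7 : Tz (i+1) = Tz i + i := Tz_succ i
        have m8 : 0 ≤ (R-1-i)*(S-R+1) := mul_nonneg (by omega) (by omega)
        have m9 : 0 ≤ (R-1-i)*i := mul_nonneg (by omega) hi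
        rw [hPi, hAi, hAj]
        refine ⟨⟨by linarith, ?_⟩, ⟨by linarith, ?_⟩⟩
        · nlinarith [two_Tz R, two_Tz (R+1)]
        · nlinarith [two_Tz R, two_Tz (R+1), two_Tz i]
      · by_cases hb4 : i = R
        · -- B4
          have hPi : Pf R S i j = Tz R + (R*S+R) + (j - R - 1) := by
            unfold Pf; rw [if_neg hb1, if_neg hb2, if_neg hb3, if_pos hb4]
          have hAi : Af R i = Tz R := by
            unfold Af; rw [if_pos (by omega : i ≤ R), hb4]
          have hAj : Af R j = Tz R + Tz (R+1) - Tz (2*R+1-j) := by unfold Af; rw [if_neg hb1]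
          have he0 : (0:ℤ) ≤ 2*R+1-j := by omega
          have m1 : 0 ≤ Tz (2*R+1-j) := Tz_nonneg he0
          have m2 : Tz (2*R+1-j) ≤ Tz R := Tz_mono he0 (by omega)
          have m3 : Tz (R+1) = Tz R + R := Tz_succ R
          have m4 : 0 ≤ R*S := mul_nonneg hR (by omega)
          rw [hPi, hAi, hAj]
          refine ⟨⟨by linarith, by linarith⟩, ⟨?_, by linarith⟩⟩
          · nlinarith [two_Tz R, two_Tz (R+1)]
        · -- B5
          have hb5 : R + 1 ≤ i := by omega
          have hPi : Pf R S i j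
              = Tz R + (R*S+R+S) + Tz S - 1 - Tz (R+S-i) - (R+S-j) := by
            unfold Pf; rw [if_neg hb1, if_neg hb2, if_neg hb3, if_neg hb4]
          have hAi : Af R i = Tz R + Tz (R+1) - Tz (2*R+1-i) := by
            unfold Af; rw [if_neg (by omega : ¬ i ≤ R)]
          have hAj : Af R j = Tz R + Tz (R+1) - Tz (2*R+1-j) := by unfold Af; rw [if_neg hb1]
          -- abbreviations: j₂ = R+S-i ≥ 1, i₂ = R+S-j ≥ 0, i₂ < j₂ ≤ S-1
          have hj2 : 1 ≤ R+S-i := by omega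
          have hi2 : 0 ≤ R+S-j := by omega
          have hij2 : R+S-j < R+S-i := by omega
          have hj2S : R+S-i ≤ S - 1 := by omega
          have hS2 : 2 ≤ S := by omega
          have m1 : Tz (R+S-i+1) = Tz (R+S-i) + (R+S-i) := Tz_succ _
          have m2 : Tz (R+S-i+1) ≤ Tz S := Tz_mono (by omega) (by omega)
          have m3 : 0 ≤ Tz (2*R+1-i) := Tz_nonneg (by omega)
          have m4 : 0 ≤ Tz (2*R+1-j) := Tz_nonneg (by omega)
          have m5 : Tz (R+S-j) ≤ Tz (R+S-i) := Tz_mono hi2 (by omega)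
          rw [hPi, hAi, hAj]
          rcases (by omega : S = R ∨ S = R + 1) with hc | hc
          · -- S = R : e_i = (R+S-i)+1, e_j = (R+S-j)+1
            have ei : Tz (2*R+1-i) = Tz (R+S-i) + (R+S-i) := by
              rw [show 2*R+1-i = (R+S-i)+1 by omega]; exact Tz_succ _
            have ej : Tz (2*R+1-j) = Tz (R+S-j) + (R+S-j) := by
              rw [show 2*R+1-j = (R+S-j)+1 by omega]; exact Tz_succ _
            have eS : Tz (R+1) = Tz S + S := by
              rw [show R+1 = S+1 by omega]; exact Tz_succ _
            have m6 : Tz (R+S-j) ≤ Tz S := Tz_mono hi2 (by omega)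
            have m7 : (R+S-j) ≤ Tz (R+S-j) + 1 := Tz_lb hi2
            refine ⟨⟨?_, by linarith⟩, ⟨?_, by linarith⟩⟩
            · nlinarith [two_Tz (R+1), two_Tz S]
            · nlinarith [two_Tz (R+1), two_Tz S, two_Tz (R+S-j)]
          · -- S = R+1 : e_i = R+S-i, e_j = R+S-j
            have ei : Tz (2*R+1-i) = Tz (R+S-i) := by rw [show 2*R+1-i = R+S-i by omega]
            have ej : Tz (2*R+1-j) = Tz (R+S-j) := by rw [show 2*R+1-j = R+S-j by omega]
            have eS : Tz (R+1) = Tz S := by rw [show R+1 = S by omega]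
            have m6 : Tz (R+S-i) ≤ Tz S := Tz_mono (by omega) (by omega)
            have m7 : (R+S-j) ≤ Tz (R+S-j) + 1 := Tz_lb hi2
            refine ⟨⟨?_, by linarith⟩, ⟨?_, by linarith⟩⟩
            · nlinarith [two_Tz S, two_Tz (R+S-i)]
            · nlinarith [two_Tz S, two_Tz (R+S-j), two_Tz (R+S-i)]
section Bands
variable {R S i j : ℤ}

private lemma Pf_lt1 (hR : 0 ≤ R) (hi : 0 ≤ i) (hij : i < j) (hb1 : j ≤ R) :
    0 ≤ Pf R S i j ∧ Pf R S i j < Tz (R+1) := by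
  have hP : Pf R S i j = Tz j + i := by unfold Pf; rw [if_pos hb1]
  have m1 : 0 ≤ Tz j := Tz_nonneg (by omega)
  have m2 : Tz (j+1) = Tz j + j := Tz_succ j
  have m3 : Tz (j+1) ≤ Tz (R+1) := Tz_mono (by omega) (by omega)
  constructor <;> [skip; skip] <;> rw [hP] <;> linarith

private lemma Pf_lt2 (hR : 0 ≤ R) (hi : 0 ≤ i) (hij : i < j)
    (hb1 : ¬ j ≤ R) (hb2 : i + j ≤ 2*R - 1) :
    Tz (R+1) ≤ Pf R S i j ∧ Pf R S i j < Tz R + Tz (R+1) := by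
  have hP : Pf R S i j = Tz R + Tz (R+1) - Tz (2*R+1-j) + i := by
    unfold Pf; rw [if_neg hb1, if_pos hb2]
  have m1 : Tz (2*R+1-j) ≤ Tz R := Tz_mono (by omega) (by omega)
  have m2 : Tz (2*R+1-j) = Tz (2*R-j) + (2*R-j) := by
    rw [show 2*R+1-j = (2*R-j)+1 by ring]; exact Tz_succ _
  have m3 : 0 ≤ Tz (2*R-j) := Tz_nonneg (by omega)
  constructor <;> rw [hP] <;> [linarith; skip]
  have : i ≤ 2*R - 1 - j := by omega
  linarith

private lemma Pf_lt3 (hR : 0 ≤ R) (hRS : R ≤ S) (hSR : S ≤ R+1) (hi : 0 ≤ i) (hij : i < j)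
    (hj : j ≤ R + S) (hb1 : ¬ j ≤ R) (hb2 : ¬ i + j ≤ 2*R - 1) (hb3 : i ≤ R - 1) :
    Tz R + Tz (R+1) ≤ Pf R S i j ∧ Pf R S i j < Tz R + (R*S+R) := by
  have hP : Pf R S i j = Tz R + Tz (R+1) + i*(S-R+1) + Tz i + (j - 2*R + i) := by
    unfold Pf; rw [if_neg hb1, if_neg hb2, if_pos hb3]
  have m1 : 0 ≤ Tz i := Tz_nonneg hi
  have m2 : 0 ≤ i*(S-R+1) := mul_nonneg hi (by omega)
  have m3 : 0 ≤ (R-1-i)*(S-R+1) := mul_nonneg (by omega) (by omega)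
  have m4 : 0 ≤ (R-1-i)*i := mul_nonneg (by omega) hi
  constructor <;> rw [hP]
  · linarith
  · nlinarith [two_Tz (R+1), two_Tz i, two_Tz R]

private lemma Pf_lt4 (hR : 0 ≤ R) (hij : i < j) (hj : j ≤ R + S)
    (hb1 : ¬ j ≤ R) (hb4 : i = R) :
    Tz R + (R*S+R) ≤ Pf R S i j ∧ Pf R S i j < Tz R + (R*S+R+S) := by
  have hb2 : ¬ i + j ≤ 2*R - 1 := by omega
  have hb3 : ¬ i ≤ R - 1 := by omega
  have hP : Pf R S i j = Tz R + (R*S+R) + (j - R - 1) := by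
    unfold Pf; rw [if_neg hb1, if_neg hb2, if_neg hb3, if_pos hb4]
  constructor <;> rw [hP] <;> omega

private lemma Pf_lt5 (hR : 0 ≤ R) (hRS : R ≤ S) (hij : i < j) (hj : j ≤ R + S)
    (hb5 : R + 1 ≤ i) :
    Tz R + (R*S+R+S) ≤ Pf R S i j := by
  have hb1 : ¬ j ≤ R := by omega
  have hb2 : ¬ i + j ≤ 2*R - 1 := by omega
  have hb3 : ¬ i ≤ R - 1 := by omega
  have hb4 : ¬ i = R := by omega
  have hP : Pf R S i j = Tz R + (R*S+R+S) + Tz S - 1 - Tz (R+S-i) - (R+S-j) := by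
    unfold Pf; rw [if_neg hb1, if_neg hb2, if_neg hb3, if_neg hb4]
  have m1 : Tz (R+S-i+1) = Tz (R+S-i) + (R+S-i) := Tz_succ _
  have m2 : Tz (R+S-i+1) ≤ Tz S := Tz_mono (by omega) (by omega)
  rw [hP]; omega

private lemma chain (hR : 0 ≤ R) (hRS : R ≤ S) (hS1 : 1 ≤ S) :
    0 ≤ Tz (R+1) ∧ Tz (R+1) ≤ Tz R + Tz (R+1) ∧
    Tz R + Tz (R+1) ≤ Tz R + (R*S+R) ∧ Tz R + (R*S+R) ≤ Tz R + (R*S+R+S) := by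
  have m1 : 0 ≤ Tz R := Tz_nonneg hR
  have m2 : 0 ≤ Tz (R+1) := Tz_nonneg (by omega)
  have hRR : R * R ≤ R * S := mul_le_mul_of_nonneg_left hRS hR
  refine ⟨m2, by linarith, ?_, by omega⟩
  nlinarith [two_Tz (R+1)]

end Bands


set_option maxHeartbeats 2000000 in
private lemma Pf_inj (R S : ℤ) (hR : 0 ≤ R) (hRS : R ≤ S) (hSR : S ≤ R + 1) (hS1 : 1 ≤ S)
    {i j i' j' : ℤ} (hi : 0 ≤ i) (hij : i < j) (hj : j ≤ R + S)
    (hi' : 0 ≤ i') (hij' : i' < j') (hj' : j' ≤ R + S)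
    (h : Pf R S i j = Pf R S i' j') : i = i' ∧ j = j' := by
  obtain ⟨c0, c1, c2, c3⟩ := chain (S := S) hR hRS hS1
  have classify : ∀ a b : ℤ, 0 ≤ a → a < b → b ≤ R + S →
      (b ≤ R ∧ 0 ≤ Pf R S a b ∧ Pf R S a b < Tz (R+1)) ∨
      ((¬ b ≤ R ∧ a + b ≤ 2*R - 1) ∧ Tz (R+1) ≤ Pf R S a b ∧ Pf R S a b < Tz R + Tz (R+1)) ∨
      ((¬ b ≤ R ∧ ¬ a + b ≤ 2*R - 1 ∧ a ≤ R - 1) ∧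
        Tz R + Tz (R+1) ≤ Pf R S a b ∧ Pf R S a b < Tz R + (R*S+R)) ∨
      ((¬ b ≤ R ∧ a = R) ∧ Tz R + (R*S+R) ≤ Pf R S a b ∧ Pf R S a b < Tz R + (R*S+R+S)) ∨
      ((R + 1 ≤ a) ∧ Tz R + (R*S+R+S) ≤ Pf R S a b) := by
    intro a b ha hab hbRS
    by_cases k1 : b ≤ R
    · exact Or.inl ⟨k1, Pf_lt1 hR ha hab k1⟩
    by_cases k2 : a + b ≤ 2*R - 1
    · exact Or.inr (Or.inl ⟨⟨k1, k2⟩, Pf_lt2 hR ha hab k1 k2⟩)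
    by_cases k3 : a ≤ R - 1
    · exact Or.inr (Or.inr (Or.inl ⟨⟨k1, k2, k3⟩, Pf_lt3 hR hRS hSR ha hab hbRS k1 k2 k3⟩))
    by_cases k4 : a = R
    · exact Or.inr (Or.inr (Or.inr (Or.inl ⟨⟨k1, k4⟩, Pf_lt4 hR hab hbRS k1 k4⟩)))
    · have k5 : R + 1 ≤ a := by omega
      exact Or.inr (Or.inr (Or.inr (Or.inr ⟨k5, Pf_lt5 hR hRS hab hbRS k5⟩)))
  rcases classify i j hi hij hj with ⟨hc, hlo, hhi⟩ | ⟨hc, hlo, hhi⟩ | ⟨hc, hlo, hhi⟩ |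
      ⟨hc, hlo, hhi⟩ | ⟨hc, hlo⟩ <;>
    rcases classify i' j' hi' hij' hj' with ⟨hc', hlo', hhi'⟩ | ⟨hc', hlo', hhi'⟩ |
      ⟨hc', hlo', hhi'⟩ | ⟨hc', hlo', hhi'⟩ | ⟨hc', hlo'⟩ <;>
    try { exfalso; linarith }
  · -- D1 : both in block 1
    have e : Pf R S i j = Tz j + i := by unfold Pf; rw [if_pos hc]
    have e' : Pf R S i' j' = Tz j' + i' := by unfold Pf; rw [if_pos hc']
    exact colex_inj hi hij hi' hij' (by rw [← e, ← e', h])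
  · -- D2 : both in block 2
    obtain ⟨hb1, hb2⟩ := hc; obtain ⟨hb1', hb2'⟩ := hc'
    have e : Pf R S i j = Tz R + Tz (R+1) - Tz (2*R+1-j) + i := by
      unfold Pf; rw [if_neg hb1, if_pos hb2]
    have e' : Pf R S i' j' = Tz R + Tz (R+1) - Tz (2*R+1-j') + i' := by
      unfold Pf; rw [if_neg hb1', if_pos hb2']
    have m2 : Tz (2*R+1-j) = Tz (2*R-j) + (2*R-j) := by
      rw [show 2*R+1-j = (2*R-j)+1 by ring]; exact Tz_succ _
    have m2' : Tz (2*R+1-j') = Tz (2*R-j') + (2*R-j') := by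
      rw [show 2*R+1-j' = (2*R-j')+1 by ring]; exact Tz_succ _
    rw [e, e'] at h
    have heq : Tz (2*R-j) + (2*R-1-j-i) = Tz (2*R-j') + (2*R-1-j'-i') := by omega
    have := colex_inj (i := 2*R-1-j-i) (j := 2*R-j) (i' := 2*R-1-j'-i') (j' := 2*R-j')
      (by omega) (by omega) (by omega) (by omega) heq
    omega
  · -- D3 : both in block 3
    obtain ⟨hb1, hb2, hb3⟩ := hc; obtain ⟨hb1', hb2', hb3'⟩ := hc'
    have e : Pf R S i j = Tz R + Tz (R+1) + i*(S-R+1) + Tz i + (j - 2*R + i) := by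
      unfold Pf; rw [if_neg hb1, if_neg hb2, if_pos hb3]
    have e' : Pf R S i' j' = Tz R + Tz (R+1) + i'*(S-R+1) + Tz i' + (j' - 2*R + i') := by
      unfold Pf; rw [if_neg hb1', if_neg hb2', if_pos hb3']
    rw [e, e'] at h
    rcases lt_trichotomy i i' with hlt | heq | hgt
    · exfalso
      have t1 : Tz (i+1) = Tz i + i := Tz_succ i
      have t2 : Tz (i+1) ≤ Tz i' := Tz_mono (by omega) (by omega)
      have t3 : 0 ≤ (i'-i-1)*(S-R+1) := mul_nonneg (by omega) (by omega)
      have t4 : i'*(S-R+1) - i*(S-R+1) - (S-R+1) = (i'-i-1)*(S-R+1) := by ring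
      linarith
    · subst heq; constructor <;> omega
    · exfalso
      have t1 : Tz (i'+1) = Tz i' + i' := Tz_succ i'
      have t2 : Tz (i'+1) ≤ Tz i := Tz_mono (by omega) (by omega)
      have t3 : 0 ≤ (i-i'-1)*(S-R+1) := mul_nonneg (by omega) (by omega)
      have t4 : i*(S-R+1) - i'*(S-R+1) - (S-R+1) = (i-i'-1)*(S-R+1) := by ring
      linarith
  · -- D4 : both in block 4
    obtain ⟨hb1, hb4⟩ := hc; obtain ⟨hb1', hb4'⟩ := hc'
    have e : Pf R S i j = Tz R + (R*S+R) + (j - R - 1) := by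
      unfold Pf; rw [if_neg hb1, if_neg (by omega : ¬ i + j ≤ 2*R - 1),
        if_neg (by omega : ¬ i ≤ R - 1), if_pos hb4]
    have e' : Pf R S i' j' = Tz R + (R*S+R) + (j' - R - 1) := by
      unfold Pf; rw [if_neg hb1', if_neg (by omega : ¬ i' + j' ≤ 2*R - 1),
        if_neg (by omega : ¬ i' ≤ R - 1), if_pos hb4']
    rw [e, e'] at h
    constructor <;> omega
  · -- D5 : both in block 5
    have e : Pf R S i j = Tz R + (R*S+R+S) + Tz S - 1 - Tz (R+S-i) - (R+S-j) := by
      unfold Pf; rw [if_neg (by omega : ¬ j ≤ R), if_neg (by omega : ¬ i + j ≤ 2*R - 1),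
        if_neg (by omega : ¬ i ≤ R - 1), if_neg (by omega : ¬ i = R)]
    have e' : Pf R S i' j' = Tz R + (R*S+R+S) + Tz S - 1 - Tz (R+S-i') - (R+S-j') := by
      unfold Pf; rw [if_neg (by omega : ¬ j' ≤ R), if_neg (by omega : ¬ i' + j' ≤ 2*R - 1),
        if_neg (by omega : ¬ i' ≤ R - 1), if_neg (by omega : ¬ i' = R)]
    rw [e, e'] at h
    have heq : Tz (R+S-i) + (R+S-j) = Tz (R+S-i') + (R+S-j') := by omega
    have := colex_inj (i := R+S-j) (j := R+S-i) (i' := R+S-j') (j' := R+S-i')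
      (by omega) (by omega) (by omega) (by omega) heq
    omega
set_option maxHeartbeats 1000000 in
private lemma upper_mem (n : ℕ) (hn : 2 ≤ n) :
    ∃ f : (completeGraph (Fin n)).edgeSet → ℤ, Function.Injective f ∧
      ∀ e e' : (completeGraph (Fin n)).edgeSet, e ≠ e' →
        (∃ v, v ∈ (e : Sym2 (Fin n)) ∧ v ∈ (e' : Sym2 (Fin n))) →
        ((f e - f e').natAbs ≤ n ^ 2 / 4 + (n + 1) / 2 - 2) := by
  classical
  set R : ℤ := (((n - 1) / 2 : ℕ) : ℤ) with hRdef
  set S : ℤ := (n : ℤ) - 1 - R with hSdef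
  have hR : 0 ≤ R := by rw [hRdef]; exact Int.natCast_nonneg _
  have hRS : R ≤ S := by rw [hSdef, hRdef]; omega
  have hSR : S ≤ R + 1 := by rw [hSdef, hRdef]; omega
  have hS1 : 1 ≤ S := by rw [hSdef, hRdef]; omega
  have hRSsum : R + S = (n : ℤ) - 1 := by rw [hSdef]; ring
  have hk : ((n ^ 2 / 4 + (n + 1) / 2 - 2 : ℕ) : ℤ) = R * S + R + S - 1 := by
    rcases Nat.even_or_odd n with ⟨q, hq⟩ | ⟨q, hq⟩
    · have h4 : n ^ 2 = 4 * (q * q) := by subst hq; ring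
      have hR' : R = (q : ℤ) - 1 := by rw [hRdef]; omega
      have hS' : S = (q : ℤ) := by rw [hSdef, hR']; omega
      have hprod : R * S = (q : ℤ) * q - q := by rw [hR', hS']; ring
      have hcast : ((q * q : ℕ) : ℤ) = (q : ℤ) * q := by push_cast; ring
      have hq1 : 1 ≤ q := by omega
      have hqq : q ≤ q * q := Nat.le_mul_of_pos_left q hq1
      omega
    · have h4 : n ^ 2 = 4 * (q * q) + 4 * q + 1 := by subst hq; ring
      have hR' : R = (q : ℤ) := by rw [hRdef]; omega
      have hS' : S = (q : ℤ) := by rw [hSdef, hR']; omega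
      have hprod : R * S = (q : ℤ) * q := by rw [hR', hS']
      have hcast : ((q * q : ℕ) : ℤ) = (q : ℤ) * q := by push_cast; ring
      have hq1 : 1 ≤ q := by omega
      have hqq : q ≤ q * q := Nat.le_mul_of_pos_left q hq1
      omega
  set f : (completeGraph (Fin n)).edgeSet → ℤ := fun e =>
    Sym2.lift ⟨fun (a b : Fin n) =>
      if (a : ℕ) ≤ (b : ℕ) then Pf R S ((a : ℕ) : ℤ) ((b : ℕ) : ℤ)
      else Pf R S ((b : ℕ) : ℤ) ((a : ℕ) : ℤ),
      by
        intro a b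
        dsimp only
        rcases le_total (a : ℕ) (b : ℕ) with h | h
        · rcases eq_or_lt_of_le h with h1 | h1
          · simp [h1]
          · rw [if_pos h, if_neg (by omega)]
        · rcases eq_or_lt_of_le h with h1 | h1
          · simp [h1]
          · rw [if_pos h, if_neg (by omega)]⟩ (e : Sym2 (Fin n)) with hfdef
  have key : ∀ e : (completeGraph (Fin n)).edgeSet, ∃ x y : Fin n,
      (x : ℕ) < (y : ℕ) ∧ (e : Sym2 (Fin n)) = s(x, y) ∧ f e = Pf R S (x : ℕ) (y : ℕ) := by
    rintro ⟨z, hz⟩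
    have main : ∀ (z : Sym2 (Fin n)), z ∈ (completeGraph (Fin n)).edgeSet →
        ∃ x y : Fin n, (x : ℕ) < (y : ℕ) ∧ z = s(x, y) := by
      intro z
      induction z using Sym2.ind with
      | _ a b =>
        intro hz
        have hab : a ≠ b := by
          rw [SimpleGraph.mem_edgeSet] at hz
          exact hz
        rcases Nat.lt_trichotomy (a : ℕ) (b : ℕ) with h | h | h
        · exact ⟨a, b, h, rfl⟩
        · exact absurd (Fin.ext h) hab
        · exact ⟨b, a, h, Sym2.eq_swap⟩
    obtain ⟨x, y, hxy, hrep⟩ := main z hz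
    refine ⟨x, y, hxy, hrep, ?_⟩
    show Sym2.lift _ z = _
    rw [hrep, Sym2.lift_mk]
    simp only
    rw [if_pos (le_of_lt hxy)]
  have validj : ∀ y : Fin n, ((y : ℕ) : ℤ) ≤ R + S := by
    intro y; have := y.isLt; omega
  refine ⟨f, ?_, ?_⟩
  · -- injectivity
    intro e e' hfe
    obtain ⟨x, y, hxy, hrep, hval⟩ := key e
    obtain ⟨x', y', hxy', hrep', hval'⟩ := key e'
    rw [hval, hval'] at hfe
    obtain ⟨hx, hy⟩ := Pf_inj R S hR hRS hSR hS1
      (Int.natCast_nonneg _) (by exact_mod_cast hxy) (validj y)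
      (Int.natCast_nonneg _) (by exact_mod_cast hxy') (validj y') hfe
    have hxx : x = x' := Fin.ext (by exact_mod_cast hx)
    have hyy : y = y' := Fin.ext (by exact_mod_cast hy)
    apply Subtype.ext
    rw [hrep, hrep', hxx, hyy]
  · -- window property
    intro e e' hne ⟨v, hv, hv'⟩
    obtain ⟨x, y, hxy, hrep, hval⟩ := key e
    obtain ⟨x', y', hxy', hrep', hval'⟩ := key e'
    have w := Pf_win R S hR hRS hSR hS1 ((x : ℕ) : ℤ) ((y : ℕ) : ℤ)
      (Int.natCast_nonneg _) (by exact_mod_cast hxy) (validj y)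
    have w' := Pf_win R S hR hRS hSR hS1 ((x' : ℕ) : ℤ) ((y' : ℕ) : ℤ)
      (Int.natCast_nonneg _) (by exact_mod_cast hxy') (validj y')
    rw [hrep, Sym2.mem_iff] at hv
    rw [hrep', Sym2.mem_iff] at hv'
    have hb : Af R ((v : ℕ) : ℤ) ≤ f e ∧ f e ≤ Af R ((v : ℕ) : ℤ) + (R*S + R + S - 1) := by
      rw [hval]; rcases hv with rfl | rfl
      · exact w.1
      · exact w.2
    have hb' : Af R ((v : ℕ) : ℤ) ≤ f e' ∧ f e' ≤ Af R ((v : ℕ) : ℤ) + (R*S + R + S - 1) := by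
      rw [hval']; rcases hv' with rfl | rfl
      · exact w'.1
      · exact w'.2
    omega
set_option maxHeartbeats 1000000 in
private lemma lower_bound (n : ℕ) (hn : 2 ≤ n) (k : ℕ)
    (f : (completeGraph (Fin n)).edgeSet → ℤ) (hinj : Function.Injective f)
    (hwin : ∀ e e' : (completeGraph (Fin n)).edgeSet, e ≠ e' →
      (∃ v, v ∈ (e : Sym2 (Fin n)) ∧ v ∈ (e' : Sym2 (Fin n))) →
      ((f e - f e').natAbs ≤ k)) :
    n ^ 2 / 4 + (n + 1) / 2 - 2 ≤ k := by
  classical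
  have hne0 : Nonempty (Fin n) := ⟨⟨0, by omega⟩⟩
  -- canonical representation of edges
  have rep : ∀ e : (completeGraph (Fin n)).edgeSet, ∃ x y : Fin n,
      (x : ℕ) < (y : ℕ) ∧ (e : Sym2 (Fin n)) = s(x, y) := by
    rintro ⟨z, hz⟩
    induction z using Sym2.ind with
    | _ a b =>
      have hab : a ≠ b := by rw [SimpleGraph.mem_edgeSet] at hz; exact hz
      rcases Nat.lt_trichotomy (a : ℕ) (b : ℕ) with h | h | h
      · exact ⟨a, b, h, rfl⟩
      · exact absurd (Fin.ext h) hab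
      · exact ⟨b, a, h, Sym2.eq_swap⟩
  -- each vertex is on some edge
  have hEv : ∀ v : Fin n, (Finset.univ.filter
      (fun e : (completeGraph (Fin n)).edgeSet => v ∈ (e : Sym2 (Fin n)))).Nonempty := by
    intro v
    have h01 : (⟨0, by omega⟩ : Fin n) ≠ ⟨1, by omega⟩ := by simp [Fin.ext_iff]
    rcases eq_or_ne v ⟨0, by omega⟩ with hv | hv
    · refine ⟨⟨s(v, ⟨1, by omega⟩), ?_⟩, ?_⟩
      · rw [SimpleGraph.mem_edgeSet]; rw [hv]; exact h01
      · simp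
    · refine ⟨⟨s(v, ⟨0, by omega⟩), ?_⟩, ?_⟩
      · rw [SimpleGraph.mem_edgeSet]; exact fun h => hv h
      · simp
  set a : Fin n → ℤ := fun v => ((Finset.univ.filter
      (fun e : (completeGraph (Fin n)).edgeSet => v ∈ (e : Sym2 (Fin n)))).image f).min'
      ((hEv v).image f) with hadef
  have ha1 : ∀ (v : Fin n) (e : (completeGraph (Fin n)).edgeSet),
      v ∈ (e : Sym2 (Fin n)) → a v ≤ f e := by
    intro v e hv
    exact Finset.min'_le _ _ (Finset.mem_image_of_mem f
      (Finset.mem_filter.mpr ⟨Finset.mem_univ _, hv⟩))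
  have ha2 : ∀ (v : Fin n) (e : (completeGraph (Fin n)).edgeSet),
      v ∈ (e : Sym2 (Fin n)) → f e ≤ a v + k := by
    intro v e hv
    obtain ⟨e0, he0mem, he0⟩ := Finset.mem_image.mp (Finset.min'_mem _ ((hEv v).image f))
    have he0' : f e0 = a v := he0
    have hv0 : v ∈ (e0 : Sym2 (Fin n)) := (Finset.mem_filter.mp he0mem).2
    rcases eq_or_ne e e0 with rfl | hne
    · omega
    · have := hwin e e0 hne ⟨v, hv, hv0⟩
      omega
  set r : ℕ := (n - 1) / 2 with hrdef
  -- threshold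
  set Vals : Finset ℤ := Finset.univ.image a with hValsdef
  set T' : Finset ℤ := Vals.filter
      (fun t => r + 1 ≤ (Finset.univ.filter (fun v => a v ≤ t)).card) with hT'def
  have hT'ne : T'.Nonempty := by
    have hVne : Vals.Nonempty := Finset.univ_nonempty.image a
    refine ⟨Vals.max' hVne, Finset.mem_filter.mpr ⟨Finset.max'_mem _ _, ?_⟩⟩
    have hfu : Finset.univ.filter (fun v => a v ≤ Vals.max' hVne) = Finset.univ := by
      apply Finset.filter_true_of_mem
      intro v _
      exact Finset.le_max' _ _ (Finset.mem_image_of_mem a (Finset.mem_univ v))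
    rw [hfu, Finset.card_univ, Fintype.card_fin]
    omega
  set t : ℤ := T'.min' hT'ne with htdef
  have ht1 : r + 1 ≤ (Finset.univ.filter (fun v => a v ≤ t)).card :=
    (Finset.mem_filter.mp (Finset.min'_mem _ hT'ne)).2
  have ht2 : (Finset.univ.filter (fun v => a v < t)).card ≤ r := by
    by_contra hc
    push_neg at hc
    have hne2 : (Finset.univ.filter (fun v => a v < t)).Nonempty :=
      Finset.card_pos.mp (by omega)
    obtain ⟨v1, hv1mem, hv1⟩ := Finset.mem_image.mp (Finset.max'_mem _ (hne2.image a))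
    have hv1lt : a v1 < t := (Finset.mem_filter.mp hv1mem).2
    have hsub : Finset.univ.filter (fun v => a v < t) ⊆
        Finset.univ.filter (fun v => a v ≤
          ((Finset.univ.filter (fun v => a v < t)).image a).max' (hne2.image a)) := by
      intro v hv
      refine Finset.mem_filter.mpr ⟨Finset.mem_univ _, ?_⟩
      exact Finset.le_max' _ _ (Finset.mem_image_of_mem a hv)
    have hmem : ((Finset.univ.filter (fun v => a v < t)).image a).max' (hne2.image a) ∈ T' := by
      refine Finset.mem_filter.mpr ⟨?_, ?_⟩
      · rw [← hv1]; exact Finset.mem_image_of_mem a (Finset.mem_univ v1)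
      · have := Finset.card_le_card hsub; omega
    have := Finset.min'_le T' _ hmem
    omega
  have ht3 : (Finset.univ.filter (fun v => t < a v)).card ≤ n - (r + 1) := by
    have hsplit := Finset.card_filter_add_card_filter_not
      (s := (Finset.univ : Finset (Fin n))) (p := fun v => a v ≤ t)
    have hcongr : Finset.univ.filter (fun v => ¬ a v ≤ t) =
        Finset.univ.filter (fun v => t < a v) := by
      apply Finset.filter_congr; intro x _; simp [not_le]
    rw [hcongr, Finset.card_univ, Fintype.card_fin] at hsplit
    omega
  -- edge counting
  set E1 := Finset.univ.filter (fun e : (completeGraph (Fin n)).edgeSet => f e < t) with hE1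
  set E2 := Finset.univ.filter
      (fun e : (completeGraph (Fin n)).edgeSet => t ≤ f e ∧ f e ≤ t + k) with hE2
  set E3 := Finset.univ.filter
      (fun e : (completeGraph (Fin n)).edgeSet => t + k < f e) with hE3
  have hcover : (Finset.univ : Finset (completeGraph (Fin n)).edgeSet) ⊆ E1 ∪ E2 ∪ E3 := by
    intro e _
    simp only [hE1, hE2, hE3, Finset.mem_union, Finset.mem_filter, Finset.mem_univ, true_and]
    omega
  have hcardsum : Fintype.card (completeGraph (Fin n)).edgeSet ≤
      E1.card + E2.card + E3.card := by
    calc Fintype.card (completeGraph (Fin n)).edgeSet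
        = (Finset.univ : Finset (completeGraph (Fin n)).edgeSet).card := Finset.card_univ.symm
      _ ≤ (E1 ∪ E2 ∪ E3).card := Finset.card_le_card hcover
      _ ≤ (E1 ∪ E2).card + E3.card := Finset.card_union_le _ _
      _ ≤ E1.card + E2.card + E3.card := by
          have := Finset.card_union_le E1 E2; omega
  -- middle bound
  have hE2card : E2.card ≤ k + 1 := by
    have h1 : E2.card ≤ (Finset.Icc t (t + k)).card := by
      apply Finset.card_le_card_of_injOn f
      · intro e he
        simp only [hE2, Finset.mem_coe, Finset.mem_filter] at he
        exact Finset.mem_Icc.mpr ⟨he.2.1, he.2.2⟩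
      · exact Function.Injective.injOn hinj
    rw [Int.card_Icc] at h1
    omega
  -- generic side bound
  have sidebound : ∀ (E : Finset (completeGraph (Fin n)).edgeSet) (A : Finset (Fin n)),
      (∀ e ∈ E, ∀ v : Fin n, v ∈ (e : Sym2 (Fin n)) → v ∈ A) →
      2 * E.card + A.card ≤ A.card * A.card := by
    intro E A hEA
    choose px py hlt hrep using rep
    have hmain : (E ×ˢ (Finset.univ : Finset Bool)).card ≤ A.offDiag.card := by
      apply Finset.card_le_card_of_injOn
        (fun p => if p.2 then (px p.1, py p.1) else (py p.1, px p.1))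
      · rintro ⟨e, b⟩ hp
        rw [Finset.mem_coe, Finset.mem_product] at hp
        have hx : px e ∈ A := hEA e hp.1 _ (by rw [hrep e]; exact Sym2.mem_mk_left _ _)
        have hy : py e ∈ A := hEA e hp.1 _ (by rw [hrep e]; exact Sym2.mem_mk_right _ _)
        have hne : px e ≠ py e := fun h => by
          have h2 := hlt e
          rw [h] at h2; omega
        cases b
        · exact Finset.mem_offDiag.mpr ⟨hy, hx, fun h => hne h.symm⟩
        · exact Finset.mem_offDiag.mpr ⟨hx, hy, hne⟩
      · rintro ⟨e, b⟩ _ ⟨e', b'⟩ _ heq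
        have hee : e = e' := by
          apply Subtype.ext
          rw [hrep e, hrep e']
          cases b <;> cases b' <;> simp only [if_true, if_false, Prod.mk.injEq,
            Bool.false_eq_true] at heq
          · rw [heq.1, heq.2]
          · rw [heq.1, heq.2]; exact Sym2.eq_swap
          · rw [← heq.1, ← heq.2]; exact Sym2.eq_swap.symm
          · rw [heq.1, heq.2]
        subst hee
        have hbb : b = b' := by
          cases b <;> cases b' <;> simp only [if_true, if_false, Prod.mk.injEq,
            Bool.false_eq_true] at heq <;> try rfl
          · exfalso
            have h2 := hlt e
            rw [heq.1] at h2
            omega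
          · exfalso
            have h2 := hlt e
            rw [heq.1] at h2
            omega
        rw [hbb]
    rw [Finset.card_product, Finset.card_univ, Fintype.card_bool, Finset.offDiag_card] at hmain
    have hxx : A.card ≤ A.card * A.card := by
      rcases Nat.eq_zero_or_pos A.card with h | h
      · simp [h]
      · exact Nat.le_mul_of_pos_left _ h
    have h2 := (Nat.le_sub_iff_add_le hxx).mp hmain
    omega
  have hE1card : 2 * E1.card + (Finset.univ.filter (fun v => a v < t)).card ≤
      (Finset.univ.filter (fun v => a v < t)).card
        * (Finset.univ.filter (fun v => a v < t)).card := by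
    apply sidebound
    intro e he v hv
    have h1 : f e < t := (Finset.mem_filter.mp he).2
    have h2 := ha1 v e hv
    exact Finset.mem_filter.mpr ⟨Finset.mem_univ _, by omega⟩
  have hE3card : 2 * E3.card + (Finset.univ.filter (fun v => t < a v)).card ≤
      (Finset.univ.filter (fun v => t < a v)).card
        * (Finset.univ.filter (fun v => t < a v)).card := by
    apply sidebound
    intro e he v hv
    have h1 : t + k < f e := (Finset.mem_filter.mp he).2
    have h2 := ha2 v e hv
    exact Finset.mem_filter.mpr ⟨Finset.mem_univ _, by omega⟩
  -- total number of edges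
  have hm : Fintype.card (completeGraph (Fin n)).edgeSet = n.choose 2 := by
    rw [← SimpleGraph.edgeFinset_card]
    have hEq : (completeGraph (Fin n)).edgeFinset = (⊤ : SimpleGraph (Fin n)).edgeFinset := by
      ext e
      rw [SimpleGraph.mem_edgeFinset, completeGraph_eq_top]
    rw [hEq, SimpleGraph.card_edgeFinset_top_eq_card_choose_two, Fintype.card_fin]
  have hchoose : 2 * n.choose 2 = n * (n - 1) := by
    rw [Nat.choose_two_right]
    have hdvd : 2 ∣ n * (n - 1) := by
      obtain ⟨m, rfl⟩ : ∃ m, n = m + 2 := ⟨n - 2, by omega⟩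
      rw [show m + 2 - 1 = m + 1 from rfl]
      rcases Nat.even_or_odd m with ⟨c, rfl⟩ | ⟨c, rfl⟩
      · exact ⟨(c + 1) * (c + c + 1), by ring⟩
      · exact ⟨(2 * c + 3) * (c + 1), by ring⟩
    omega
  -- final arithmetic
  obtain ⟨c1, hc1a, hc1b⟩ : ∃ c, 2 * E1.card + c ≤ c * c ∧ c ≤ r := ⟨_, hE1card, ht2⟩
  obtain ⟨c3, hc3a, hc3b⟩ : ∃ c, 2 * E3.card + c ≤ c * c ∧ c ≤ n - (r + 1) :=
    ⟨_, hE3card, ht3⟩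
  have sq_sub_mono : ∀ c p : ℕ, c ≤ p → c * c + p ≤ p * p + c := by
    intro c p h
    rcases eq_or_lt_of_le h with rfl | h
    · omega
    · have h2 : c * c ≤ c * p := Nat.mul_le_mul_left _ h.le
      have h3 : (c + 1) * p ≤ p * p := Nat.mul_le_mul_right _ (by omega)
      have h4 : (c + 1) * p = c * p + p := by ring
      omega
  rcases Nat.even_or_odd n with ⟨q, hq⟩ | ⟨q, hq⟩
  · obtain ⟨p, rfl⟩ : ∃ p, q = p + 1 := ⟨q - 1, by omega⟩
    subst hq
    have hnn : (p+1+(p+1)) * (p+1+(p+1) - 1) + 2 * p + 2 = 4 * ((p+1) * (p+1)) := by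
      rw [show p+1+(p+1) - 1 = 2*p+1 from by omega]; ring
    have hF : 2 * Fintype.card ((completeGraph (Fin (p+1+(p+1)))).edgeSet) + 2*p + 2
        = 4 * ((p+1) * (p+1)) := by omega
    have hgoal1 : (p+1+(p+1))^2/4 = p*p + 2*p + 1 := by
      have h5 : (p+1+(p+1))^2 = 4*(p*p + 2*p + 1) := by ring
      omega
    have hgoal2 : (p+1+(p+1)+1)/2 = p+1 := by omega
    rw [hgoal1, hgoal2, Nat.sub_le_iff_le_add]
    have hr : r = p := by omega
    have hm1 : 2 * E1.card + p ≤ p * p := by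
      have := sq_sub_mono c1 p (by omega); omega
    have hm3 : 2 * E3.card + (p+1) ≤ (p+1) * (p+1) := by
      have := sq_sub_mono c3 (p+1) (by omega); omega
    have hlink : (p+1) * (p+1) = p * p + 2 * p + 1 := by ring
    omega
  · subst hq
    have hq1 : 1 ≤ q := by omega
    have hnn : (2*q+1) * (2*q+1 - 1) = 4 * (q * q) + 2 * q := by
      rw [show 2*q+1 - 1 = 2*q from by omega]; ring
    have hF : 2 * Fintype.card ((completeGraph (Fin (2*q+1))).edgeSet)
        = 4 * (q * q) + 2 * q := by omega
    have hgoal1 : (2*q+1)^2/4 = q*q + q := by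
      have h5 : (2*q+1)^2 = 4*(q*q + q) + 1 := by ring
      omega
    have hgoal2 : (2*q+1+1)/2 = q+1 := by omega
    rw [hgoal1, hgoal2, Nat.sub_le_iff_le_add]
    have hr : r = q := by omega
    have hm1 : 2 * E1.card + q ≤ q * q := by
      have := sq_sub_mono c1 q (by omega); omega
    have hm3 : 2 * E3.card + q ≤ q * q := by
      have := sq_sub_mono c3 q (by omega); omega
    omega

theorem edgeBW_completeGraph (n : ℕ) (hn : 2 ≤ n) :
    edgeBW (completeGraph (Fin n)) = n ^ 2 / 4 + (n + 1) / 2 - 2 := by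
  unfold edgeBW
  apply le_antisymm
  · apply Nat.sInf_le
    obtain ⟨f, h1, h2⟩ := upper_mem n hn
    exact ⟨f, h1, h2⟩
  · apply le_csInf
    · obtain ⟨f, h1, h2⟩ := upper_mem n hn
      exact ⟨_, f, h1, h2⟩
    · rintro k ⟨f, h1, h2⟩
      exact lower_bound n hn k f h1 h2
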